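/- Let p be prime and n a positive integer with gcd(n, p) = 1. Let R3 = Z_p[u]/(u^3) and let C be a cyclic code of length n over R3 of the form C = <g(x), u·a1(x), u^2·a2(x)> where a2(x) | a1(x) | g(x) | (x^n - 1) in Z_p[x]. Then C is a principal ideal, generated by g(x) + u·a1(x) + u^2·a2(x). -/

import Mathlib

open Polynomial

noncomputable section

/-- `Ru p k` is the ring `R_k = Z_p[u]/(u^k)`. -/
abbrev Ru (p k : ℕ) : Type := Polynomial (ZMod p) ⧸ Ideal.span {(X : Polynomial (ZMod p)) ^ k}

instance instCommRingRu (p k : ℕ) : CommRing (Ru p k) := Ideal.Quotient.commRing _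

/-- The element `u` of `Ru p k`. -/
abbrev uR (p k : ℕ) : Ru p k := Ideal.Quotient.mk _ (X : Polynomial (ZMod p))

/-- `Rn p k n` is the ring `R_k[x]/(x^n - 1)`; its ideals are the cyclic codes of length `n`. -/
abbrev Rn (p k n : ℕ) : Type :=
  Polynomial (Ru p k) ⧸ Ideal.span {(X : Polynomial (Ru p k)) ^ n - 1}

/-- The natural ring map `Z_p[x] → R_k[x]/(x^n - 1)`. -/
abbrev liftP (p k n : ℕ) : Polynomial (ZMod p) →+* Rn p k n :=
  (Ideal.Quotient.mk _).comp (mapRingHom (algebraMap (ZMod p) (Ru p k)))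

/-- `u` as an element of `R_k[x]/(x^n - 1)`. -/
abbrev uu (p k n : ℕ) : Rn p k n := Ideal.Quotient.mk _ (C (uR p k))

/-- `x` as an element of `R_k[x]/(x^n - 1)`. -/
abbrev xx (p k n : ℕ) : Rn p k n := Ideal.Quotient.mk _ (X : Polynomial (Ru p k))

/-- Abstract version of the principal-generator argument in a commutative ring. -/
theorem span_triple_eq_span_sum {S : Type*} [CommRing S]
    (u G A1 A2 Hg H1 M1 M2 s t s1 t1 : S)
    (hu : u ^ 3 = 0) (hHgG : Hg * G = 0) (hH1A1 : H1 * A1 = 0)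
    (hG : G = M1 * A1) (hA1 : A1 = M2 * A2)
    (hst : s * G + t * Hg = 1) (hs1 : s1 * A1 + t1 * H1 = 1) :
    Ideal.span {G, u * A1, u ^ 2 * A2} = Ideal.span {G + u * A1 + u ^ 2 * A2} := by
  set f := G + u * A1 + u ^ 2 * A2 with hf_def
  have hf : f ∈ Ideal.span {f} := Ideal.mem_span_singleton_self f
  -- u^2 * G ∈ span {f}
  have h1 : u ^ 2 * G ∈ Ideal.span {f} := by
    have e : u ^ 2 * G = u ^ 2 * f := by
      rw [hf_def]; linear_combination (-A1 - u * A2) * hu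
    rw [e]; exact Ideal.mul_mem_left _ _ hf
  -- u^2 * (H1 * A2) ∈ span {f}
  have h2 : u ^ 2 * (H1 * A2) ∈ Ideal.span {f} := by
    have e : u ^ 2 * (H1 * A2) = H1 * f := by
      rw [hf_def]; linear_combination (-H1) * hG + (-M1 - u) * hH1A1
    rw [e]; exact Ideal.mul_mem_left _ _ hf
  -- u^2 * (Hg * A1) ∈ span {f}
  have h3 : u ^ 2 * (Hg * A1) ∈ Ideal.span {f} := by
    have e : u ^ 2 * (Hg * A1) = (u * Hg) * f := by
      rw [hf_def]; linear_combination (-u) * hHgG + (-Hg * A2) * hu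
    rw [e]; exact Ideal.mul_mem_left _ _ hf
  -- u^2 * A1 ∈ span {f}
  have h4 : u ^ 2 * A1 ∈ Ideal.span {f} := by
    have e : u ^ 2 * A1 = (s * A1) * (u ^ 2 * G) + t * (u ^ 2 * (Hg * A1)) := by
      linear_combination (-(u ^ 2) * A1) * hst
    rw [e]
    exact Ideal.add_mem _ (Ideal.mul_mem_left _ _ h1) (Ideal.mul_mem_left _ _ h3)
  -- u^2 * A2 ∈ span {f}
  have h5 : u ^ 2 * A2 ∈ Ideal.span {f} := by
    have e : u ^ 2 * A2 = (s1 * A2) * (u ^ 2 * A1) + t1 * (u ^ 2 * (H1 * A2)) := by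
      linear_combination (-(u ^ 2) * A2) * hs1
    rw [e]
    exact Ideal.add_mem _ (Ideal.mul_mem_left _ _ h4) (Ideal.mul_mem_left _ _ h2)
  -- u * G ∈ span {f}
  have h6 : u * G ∈ Ideal.span {f} := by
    have e : u * G = u * f - u ^ 2 * A1 - u * (u ^ 2 * A2) := by
      rw [hf_def]; ring
    rw [e]
    exact Ideal.sub_mem _ (Ideal.sub_mem _ (Ideal.mul_mem_left _ _ hf) h4)
      (Ideal.mul_mem_left _ _ h5)
  -- u * (Hg * A1) ∈ span {f}
  have h7 : u * (Hg * A1) ∈ Ideal.span {f} := by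
    have e : u * (Hg * A1) = Hg * f - Hg * (u ^ 2 * A2) := by
      rw [hf_def]; linear_combination -hHgG
    rw [e]
    exact Ideal.sub_mem _ (Ideal.mul_mem_left _ _ hf) (Ideal.mul_mem_left _ _ h5)
  -- u * A1 ∈ span {f}
  have h8 : u * A1 ∈ Ideal.span {f} := by
    have e : u * A1 = (s * A1) * (u * G) + t * (u * (Hg * A1)) := by
      linear_combination (-u * A1) * hst
    rw [e]
    exact Ideal.add_mem _ (Ideal.mul_mem_left _ _ h6) (Ideal.mul_mem_left _ _ h7)
  -- G ∈ span {f}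
  have h9 : G ∈ Ideal.span {f} := by
    have e : G = f - u * A1 - u ^ 2 * A2 := by rw [hf_def]; ring
    rw [e]
    exact Ideal.sub_mem _ (Ideal.sub_mem _ hf h8) h5
  apply le_antisymm
  · rw [Ideal.span_le]
    rintro x hx
    simp only [Set.mem_insert_iff, Set.mem_singleton_iff] at hx
    rcases hx with rfl | rfl | rfl
    · exact h9
    · exact h8
    · exact h5
  · rw [Ideal.span_le, Set.singleton_subset_iff]
    exact Ideal.add_mem _
      (Ideal.add_mem _
        (Ideal.subset_span (by simp))
        (Ideal.subset_span (by simp)))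
      (Ideal.subset_span (by simp))

/-- Over `R_3 = Z_p[u]/(u^3)`, if `gcd(n,p) = 1` and
`C = <g(x), u a1(x), u^2 a2(x)>` with `a2 ∣ a1 ∣ g ∣ x^n - 1` in `Z_p[x]`,
then `C = <g(x) + u a1(x) + u^2 a2(x)>`. -/
theorem stmt1 (p n : ℕ) (hp : p.Prime) (hn : 0 < n) (hco : Nat.Coprime n p)
    (g a1 a2 : Polynomial (ZMod p)) (Ck : Ideal (Rn p 3 n))
    (h21 : a2 ∣ a1) (h1g : a1 ∣ g) (hg : g ∣ (X : Polynomial (ZMod p)) ^ n - 1)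
    (hC : Ck = Ideal.span {liftP p 3 n g, uu p 3 n * liftP p 3 n a1,
      uu p 3 n ^ 2 * liftP p 3 n a2}) :
    Ck = Ideal.span {liftP p 3 n g + uu p 3 n * liftP p 3 n a1 +
      uu p 3 n ^ 2 * liftP p 3 n a2} := by
  haveI := Fact.mk hp
  -- (n : ZMod p) ≠ 0
  have hnz : (n : ZMod p) ≠ 0 := by
    intro h
    rw [ZMod.natCast_eq_zero_iff] at h
    have hdvd := h
    have := Nat.Coprime.eq_one_of_dvd hco.symm hdvd
    exact hp.one_lt.ne' this
  -- x^n - 1 is squarefree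
  have hsq : Squarefree ((X : Polynomial (ZMod p)) ^ n - 1) := by
    have := (Polynomial.separable_X_pow_sub_C (1 : ZMod p) hnz one_ne_zero).squarefree
    simpa using this
  -- cofactors
  have ha1d := h1g.trans hg
  obtain ⟨hgq, hq⟩ := hg
  obtain ⟨h1q, h1qe⟩ := ha1d
  obtain ⟨M1, hM1⟩ := h1g
  obtain ⟨M2, hM2⟩ := h21
  -- coprimality / Bezout
  have hcg : IsCoprime g hgq := by
    have : Squarefree (g * hgq) := hq ▸ hsq
    exact ((squarefree_mul_iff.mp this).1).isCoprime
  have hc1 : IsCoprime a1 h1q := by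
    have : Squarefree (a1 * h1q) := h1qe ▸ hsq
    exact ((squarefree_mul_iff.mp this).1).isCoprime
  obtain ⟨s, t, hst⟩ := hcg
  obtain ⟨s1, t1, hs1⟩ := hc1
  set φ := liftP p 3 n with hφ
  -- φ kills x^n - 1
  have hphi0 : φ ((X : Polynomial (ZMod p)) ^ n - 1) = 0 := by
    show Ideal.Quotient.mk _ (mapRingHom (algebraMap (ZMod p) (Ru p 3))
      ((X : Polynomial (ZMod p)) ^ n - 1)) = 0
    have e : mapRingHom (algebraMap (ZMod p) (Ru p 3)) ((X : Polynomial (ZMod p)) ^ n - 1)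
        = (X : Polynomial (Ru p 3)) ^ n - 1 := by
      simp
    rw [e, Ideal.Quotient.eq_zero_iff_mem]
    exact Ideal.subset_span rfl
  -- u^3 = 0
  have huR : (uR p 3) ^ 3 = 0 := by
    show (Ideal.Quotient.mk _ (X : Polynomial (ZMod p))) ^ 3 = 0
    rw [← map_pow, Ideal.Quotient.eq_zero_iff_mem]
    exact Ideal.subset_span rfl
  have hu : (uu p 3 n) ^ 3 = 0 := by
    show (Ideal.Quotient.mk _ (C (uR p 3))) ^ 3 = 0
    rw [← map_pow, ← C_pow, huR, map_zero, map_zero]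
  -- mapped relations
  have hHgG : φ hgq * φ g = 0 := by
    rw [← map_mul, mul_comm, ← hq, hphi0]
  have hH1A1 : φ h1q * φ a1 = 0 := by
    rw [← map_mul, mul_comm, ← h1qe, hphi0]
  have hGrel : φ g = φ M1 * φ a1 := by
    rw [← map_mul, mul_comm, ← hM1]
  have hA1rel : φ a1 = φ M2 * φ a2 := by
    rw [← map_mul, mul_comm, ← hM2]
  have hstφ : φ s * φ g + φ t * φ hgq = 1 := by
    rw [← map_mul, ← map_mul, ← map_add, hst, map_one]
  have hs1φ : φ s1 * φ a1 + φ t1 * φ h1q = 1 := by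
    rw [← map_mul, ← map_mul, ← map_add, hs1, map_one]
  rw [hC]
  exact span_triple_eq_span_sum (uu p 3 n) (φ g) (φ a1) (φ a2) (φ hgq) (φ h1q)
    (φ M1) (φ M2) (φ s) (φ t) (φ s1) (φ t1) hu hHgG hH1A1 hGrel hA1rel hstφ hs1φ
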